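/- arXiv:1403.3157 — 7 statements merged into one kernel-verified Lean document; each statement's English description precedes it below -/
import Mathlib

section
/- Truth lemma for the embedding of modal logic K into BFNL*: for every binary Kripke model M = (W,R,V), every w ∈ W, and every modal formula A, we have M, w ⊨ A if and only if J^M, w₁ ⊨ A†, where J^M is the ternary model obtained by duplicating each state. -/
/-- Formulas of BFNL*: atoms, ⊥, ⊤, ∧, ∨, ·, \, /, ¬. -/
inductive Fm : Type
  | atom : ℕ → Fm
  | bot  : Fm
  | top  : Fm
  | conj : Fm → Fm → Fm
  | disj : Fm → Fm → Fm
  | prod : Fm → Fm → Fm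
  | ldiv : Fm → Fm → Fm   -- A \ B
  | rdiv : Fm → Fm → Fm   -- A / B
  | neg  : Fm → Fm
  deriving DecidableEq

/-- Formula trees. -/
inductive Tr : Type
  | leaf : Fm → Tr
  | comma : Tr → Tr → Tr
  deriving DecidableEq

/-- One-hole contexts in formula trees. -/
inductive Ctx : Type
  | hole : Ctx
  | left : Ctx → Tr → Ctx
  | right : Tr → Ctx → Ctx

/-- Fill a context with a possibly empty tree (the hole is deleted if empty). -/
def Ctx.fillOpt : Ctx → Option Tr → Option Tr
  | .hole, t => t
  | .left c d, t => some (match c.fillOpt t with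
      | none => d
      | some g => .comma g d)
  | .right g c, t => some (match c.fillOpt t with
      | none => g
      | some d => .comma g d)

/-- `A ∘ Γ` with possibly empty `Γ`. -/
def Tr.pre (A : Fm) : Option Tr → Tr
  | none => .leaf A
  | some g => .comma (.leaf A) g

/-- `Γ ∘ B` with possibly empty `Γ`. -/
def Tr.post : Option Tr → Fm → Tr
  | none, B => .leaf B
  | some g, B => .comma g (.leaf B)

/-- Derivability in the sequent calculus BFNL* (empty antecedents permitted). -/
inductive Der : Option Tr → Fm → Prop
  | id (A) : Der (some (.leaf A)) A
  | distr (A B C) :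
      Der (some (.leaf (.conj A (.disj B C)))) (.disj (.conj A B) (.conj A C))
  | botL (Γ : Ctx) (A) : Der (Γ.fillOpt (some (.leaf .bot))) A
  | topR (t) : Der t .top
  | neg1 (A) : Der (some (.leaf (.conj A (.neg A)))) .bot
  | neg2 (A) : Der (some (.leaf .top)) (.disj A (.neg A))
  | ldivL (Γ : Ctx) (Δ : Tr) (A B C) :
      Der (some Δ) A → Der (Γ.fillOpt (some (.leaf B))) C →
      Der (Γ.fillOpt (some (.comma Δ (.leaf (.ldiv A B))))) C
  | ldivR (t A B) : Der (some (Tr.pre A t)) B → Der t (.ldiv A B)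
  | rdivL (Γ : Ctx) (Δ : Tr) (A B C) :
      Der (Γ.fillOpt (some (.leaf A))) C → Der (some Δ) B →
      Der (Γ.fillOpt (some (.comma (.leaf (.rdiv A B)) Δ))) C
  | rdivR (t A B) : Der (some (Tr.post t B)) A → Der t (.rdiv A B)
  | prodL (Γ : Ctx) (A B C) :
      Der (Γ.fillOpt (some (.comma (.leaf A) (.leaf B)))) C →
      Der (Γ.fillOpt (some (.leaf (.prod A B)))) C
  | prodR (Γ Δ : Tr) (A B) :
      Der (some Γ) A → Der (some Δ) B → Der (some (.comma Γ Δ)) (.prod A B)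
  | conjL1 (Γ : Ctx) (A1 A2 B) :
      Der (Γ.fillOpt (some (.leaf A1))) B →
      Der (Γ.fillOpt (some (.leaf (.conj A1 A2)))) B
  | conjL2 (Γ : Ctx) (A1 A2 B) :
      Der (Γ.fillOpt (some (.leaf A2))) B →
      Der (Γ.fillOpt (some (.leaf (.conj A1 A2)))) B
  | conjR (t A B) : Der t A → Der t B → Der t (.conj A B)
  | disjL (Γ : Ctx) (A1 A2 B) :
      Der (Γ.fillOpt (some (.leaf A1))) B →
      Der (Γ.fillOpt (some (.leaf A2))) B →
      Der (Γ.fillOpt (some (.leaf (.disj A1 A2)))) B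
  | disjR1 (t A1 A2) : Der t A1 → Der t (.disj A1 A2)
  | disjR2 (t A1 A2) : Der t A2 → Der t (.disj A1 A2)
  | cut (Γ : Ctx) (t A B) :
      Der t A → Der (Γ.fillOpt (some (.leaf A))) B → Der (Γ.fillOpt t) B

/-- A ternary relational model for BFNL*. -/
structure RMod where
  W : Type
  ne : Nonempty W
  R : W → W → W → Prop
  V : ℕ → W → Prop

/-- Satisfaction of a formula at a state of a ternary relational model. -/
def sat (M : RMod) : Fm → M.W → Prop
  | .atom n, u => M.V n u
  | .bot, _ => False
  | .top, _ => True
  | .conj A B, u => sat M A u ∧ sat M B u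
  | .disj A B, u => sat M A u ∨ sat M B u
  | .neg A, u => ¬ sat M A u
  | .prod A B, u => ∃ v w, M.R u v w ∧ sat M A v ∧ sat M B w
  | .rdiv A B, u => ∀ v w, M.R w u v → sat M B v → sat M A w
  | .ldiv A B, u => ∀ v w, M.R v w u → sat M A w → sat M B v

/-- Satisfaction of (the product formula of) a formula tree. -/
def satTr (M : RMod) : Tr → M.W → Prop
  | .leaf A, u => sat M A u
  | .comma Γ Δ, u => ∃ v w, M.R u v w ∧ satTr M Γ v ∧ satTr M Δ w

/-- Satisfaction of a possibly empty antecedent. -/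
def satOpt (M : RMod) : Option Tr → M.W → Prop
  | none, _ => True
  | some Γ, u => satTr M Γ u

/-- Modal formulas: atoms, ⊥, ∧, ∨, ⊃, ◇. -/
inductive MF : Type
  | atom : ℕ → MF
  | bot  : MF
  | conj : MF → MF → MF
  | disj : MF → MF → MF
  | impl : MF → MF → MF
  | dia  : MF → MF
  deriving DecidableEq

/-- A binary Kripke model. -/
structure KMod where
  W : Type
  ne : Nonempty W
  R : W → W → Prop
  V : ℕ → W → Prop

/-- Kripke satisfaction for modal formulas. -/
def msat (M : KMod) : MF → M.W → Prop
  | .atom n, u => M.V n u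
  | .bot, _ => False
  | .conj A B, u => msat M A u ∧ msat M B u
  | .disj A B, u => msat M A u ∨ msat M B u
  | .impl A B, u => msat M A u → msat M B u
  | .dia A, u => ∃ v, M.R u v ∧ msat M A v

/-- The translation `†` of modal formulas into BFNL* formulas; the distinguished
fresh letter `m` is `Fm.atom 0`, and modal atom `p` becomes `Fm.atom (p+1)`. -/
def dag : MF → Fm
  | .atom n => .atom (n + 1)
  | .bot => .bot
  | .conj A B => .conj (dag A) (dag B)
  | .disj A B => .disj (dag A) (dag B)
  | .impl A B => .disj (.neg (dag A)) (dag B)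
  | .dia A => .prod (.atom 0) (dag A)

/-- The ternary model `J^M` obtained from a binary Kripke model `M` by duplicating
each state: `w₁ = (w, false)`, `w₂ = (w, true)`. -/
def JM (M : KMod) : RMod where
  W := M.W × Bool
  ne := ⟨(M.ne.some, false)⟩
  R a b c := ∃ w u, M.R w u ∧ a = (w, false) ∧ b = (w, true) ∧ c = (u, false)
  V n x := match n with
    | 0 => True
    | n + 1 => M.V n x.1

/-- Truth lemma for the embedding of K into BFNL*: `M, w ⊨ A` iff `J^M, w₁ ⊨ A†`. -/
theorem stmt6 (M : KMod) (w : M.W) (A : MF) :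
    msat M A w ↔ sat (JM M) (dag A) (w, false) := by
  induction A generalizing w with
  | atom n => simp [msat, dag, sat, JM]
  | bot => simp [msat, dag, sat]
  | conj A B ihA ihB => simp [msat, dag, sat, ihA, ihB]
  | disj A B ihA ihB => simp [msat, dag, sat, ihA, ihB]
  | impl A B ihA ihB =>
    simp only [msat, dag, sat, ihA, ihB]
    tauto
  | dia A ih =>
    simp only [msat, dag, sat, JM]
    constructor
    · rintro ⟨u, hR, hA⟩
      exact ⟨(w, true), (u, false), ⟨w, u, hR, rfl, rfl, rfl⟩, trivial, (ih u).1 hA⟩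
    · rintro ⟨v, x, ⟨w', u, hR, h1, h2, h3⟩, -, hA⟩
      cases h1; cases h3
      exact ⟨u, hR, (ih u).2 hA⟩
end

section
/- The translated K axiom is a theorem of BFNL*: the sequent ⇒ (m·(A∧¬B)) ∨ (m·¬A) ∨ ¬(m·¬B) is derivable in BFNL* for all formulas A, B. -/
/-- The translated K axiom `⇒ (m·(A∧¬B)) ∨ (m·¬A) ∨ ¬(m·¬B)` is derivable in BFNL*,
for any propositional letter `m` and formulas `A`, `B`. -/
theorem stmt8 (n : ℕ) (A B : Fm) :
    Der none
      (.disj (.prod (.atom n) (.conj A (.neg B)))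
        (.disj (.prod (.atom n) (.neg A)) (.neg (.prod (.atom n) (.neg B))))) := by

  set m := Fm.atom n with hm
  set D := Fm.prod m (.neg B) with hD
  set G := Fm.disj (.prod m (.conj A (.neg B))) (.disj (.prod m (.neg A)) (.neg D)) with hG
  -- ¬B ⊢ (¬B∧A)∨(¬B∧¬A)
  have hc : Der (some (.leaf (.neg B))) (.conj (.neg B) (.disj A (.neg A))) :=
    .conjR _ _ _ (.id _)
      (.cut .hole (some (.leaf (.neg B))) .top _ (.topR _) (.neg2 A))
  have ha : Der (some (.leaf (.neg B))) (.disj (.conj (.neg B) A) (.conj (.neg B) (.neg A))) :=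
    .cut .hole (some (.leaf (.neg B))) _ _ hc (.distr (.neg B) A (.neg A))
  -- (m, ¬B∧A) ⊢ G  and  (m, ¬B∧¬A) ⊢ G via disjL at context (m, -)
  have hb : Der (some (.comma (.leaf m) (.leaf (.disj (.conj (.neg B) A) (.conj (.neg B) (.neg A)))))) G :=
    Der.disjL (.right (.leaf m) .hole) _ _ G
      (Der.disjR1 _ _ _
        (Der.prodR (.leaf m) (.leaf (.conj (.neg B) A)) m (.conj A (.neg B)) (.id m)
          (Der.conjR _ _ _
            (Der.conjL2 .hole (.neg B) A A (.id A))
            (Der.conjL1 .hole (.neg B) A (.neg B) (.id (.neg B))))))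
      (Der.disjR2 _ _ _ (Der.disjR1 _ _ _
        (Der.prodR (.leaf m) (.leaf (.conj (.neg B) (.neg A))) m (.neg A) (.id m)
          (Der.conjL2 .hole (.neg B) (.neg A) (.neg A) (.id (.neg A))))))
  have h6 : Der (some (.comma (.leaf m) (.leaf (.neg B)))) G :=
    Der.cut (.right (.leaf m) .hole) (some (.leaf (.neg B))) _ G ha hb
  have h4 : Der (some (.leaf D)) G := Der.prodL .hole m (.neg B) G h6
  have h3 : Der (some (.leaf (.disj D (.neg D)))) G :=
    Der.disjL .hole D (.neg D) G h4 (Der.disjR2 _ _ _ (Der.disjR2 _ _ _ (.id _)))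
  have h2 : Der none (.disj D (.neg D)) :=
    Der.cut .hole none .top _ (.topR none) (.neg2 D)
  exact Der.cut .hole none (.disj D (.neg D)) G h2 h3
end

section
/- Modus ponens is admissible under the † translation in BFNL*: if ⇒ A and ⇒ ¬A ∨ B are both derivable in BFNL*, then ⇒ B is derivable in BFNL*. -/
/-- Modus ponens is admissible in BFNL*: from `⇒ A` and `⇒ ¬A ∨ B` infer `⇒ B`. -/
theorem stmt9 (A B : Fm) (h1 : Der none A) (h2 : Der none (.disj (.neg A) B)) :
    Der none B := by
  have hconj : Der none (.conj A (.disj (.neg A) B)) := Der.conjR none _ _ h1 h2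
  have hd : Der none (.disj (.conj A (.neg A)) (.conj A B)) :=
    Der.cut .hole none _ _ hconj (Der.distr A (.neg A) B)
  have l1 : Der (some (.leaf (.conj A (.neg A)))) B :=
    Der.cut .hole _ _ _ (Der.neg1 A) (Der.botL .hole B)
  have l2 : Der (some (.leaf (.conj A B))) B := Der.conjL2 .hole A B B (Der.id B)
  have hdisj : Der (some (.leaf (.disj (.conj A (.neg A)) (.conj A B)))) B :=
    Der.disjL .hole _ _ _ l1 l2
  exact Der.cut .hole none _ _ hd hdisj
end

section
/- Pseudo-complement lemma in BDFNL*: let T be a set of formulas containing ⊤ and ⊥ closed under subformulas, c(T) its closure under ∧ and ∨, and define A∼ by ⊤∼ = ⊥, ⊥∼ = ⊤, A∼ = p_A for A ∈ T with A ≠ ⊤,⊥, (A∧B)∼ = A∼∨B∼, (A∨B)∼ = A∼∧B∼. Let Ψ[T] = {A∧p_A ⇒ ⊥ : A ∈ T} ∪ {A∨p_A ⇒ ⊤ : A ∈ T}. Then for every A ∈ c(T), both A∧A∼ ⇒ ⊥ and A∨A∼ ⇒ ⊤ are derivable from Ψ[T] in BDFNL* using only c(T)-sequents. -/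
/-- The formulas at the leaves of a formula tree. -/
def Tr.leaves : Tr → Set Fm
  | .leaf A => {A}
  | .comma a b => a.leaves ∪ b.leaves

/-- A sequent is an `S`-sequent if all formulas occurring in it belong to `S`. -/
def SeqIn (S : Set Fm) : Option Tr → Fm → Prop
  | none, A => A ∈ S
  | some Γ, A => Γ.leaves ⊆ S ∧ A ∈ S

/-- Atoms occurring in a formula. -/
def Fm.atoms : Fm → Set ℕ
  | .atom n => {n}
  | .bot => ∅
  | .top => ∅
  | .conj A B => A.atoms ∪ B.atoms
  | .disj A B => A.atoms ∪ B.atoms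
  | .prod A B => A.atoms ∪ B.atoms
  | .ldiv A B => A.atoms ∪ B.atoms
  | .rdiv A B => A.atoms ∪ B.atoms
  | .neg A => A.atoms

/-- Negation-free formulas (the language of BDFNL*). -/
def Fm.NegFree : Fm → Prop
  | .atom _ => True
  | .bot => True
  | .top => True
  | .conj A B => A.NegFree ∧ B.NegFree
  | .disj A B => A.NegFree ∧ B.NegFree
  | .prod A B => A.NegFree ∧ B.NegFree
  | .ldiv A B => A.NegFree ∧ B.NegFree
  | .rdiv A B => A.NegFree ∧ B.NegFree
  | .neg _ => False

/-- Immediate subformulas. -/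
def Fm.imm : Fm → List Fm
  | .atom _ => []
  | .bot => []
  | .top => []
  | .conj A B => [A, B]
  | .disj A B => [A, B]
  | .prod A B => [A, B]
  | .ldiv A B => [A, B]
  | .rdiv A B => [A, B]
  | .neg A => [A]

/-- `T` is closed under subformulas. -/
def SubClosed (T : Set Fm) : Prop := ∀ A ∈ T, ∀ B ∈ A.imm, B ∈ T

/-- `cl T`: the closure of `T` under ∧ and ∨. -/
inductive cl (T : Set Fm) : Set Fm
  | base {A} : A ∈ T → cl T A
  | conj {A B} : cl T A → cl T B → cl T (.conj A B)
  | disj {A B} : cl T A → cl T B → cl T (.disj A B)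

/-- Derivability in BDFNL* (bounded distributive full nonassociative Lambek
calculus, no negation) from a set `Φ` of simple-sequent assumptions, using only
`S`-sequents throughout the derivation. -/
inductive DerB (Φ : Set (Fm × Fm)) (S : Set Fm) : Option Tr → Fm → Prop
  | hyp {A B} : (A, B) ∈ Φ → SeqIn S (some (.leaf A)) B →
      DerB Φ S (some (.leaf A)) B
  | id (A) : SeqIn S (some (.leaf A)) A → DerB Φ S (some (.leaf A)) A
  | distr (A B C) :
      SeqIn S (some (.leaf (.conj A (.disj B C)))) (.disj (.conj A B) (.conj A C)) →
      DerB Φ S (some (.leaf (.conj A (.disj B C)))) (.disj (.conj A B) (.conj A C))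
  | botL (Γ : Ctx) (A) : SeqIn S (Γ.fillOpt (some (.leaf .bot))) A →
      DerB Φ S (Γ.fillOpt (some (.leaf .bot))) A
  | topR (t) : SeqIn S t .top → DerB Φ S t .top
  | ldivL (Γ : Ctx) (Δ : Tr) (A B C) :
      DerB Φ S (some Δ) A → DerB Φ S (Γ.fillOpt (some (.leaf B))) C →
      SeqIn S (Γ.fillOpt (some (.comma Δ (.leaf (.ldiv A B))))) C →
      DerB Φ S (Γ.fillOpt (some (.comma Δ (.leaf (.ldiv A B))))) C
  | ldivR (t A B) : DerB Φ S (some (Tr.pre A t)) B → SeqIn S t (.ldiv A B) →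
      DerB Φ S t (.ldiv A B)
  | rdivL (Γ : Ctx) (Δ : Tr) (A B C) :
      DerB Φ S (Γ.fillOpt (some (.leaf A))) C → DerB Φ S (some Δ) B →
      SeqIn S (Γ.fillOpt (some (.comma (.leaf (.rdiv A B)) Δ))) C →
      DerB Φ S (Γ.fillOpt (some (.comma (.leaf (.rdiv A B)) Δ))) C
  | rdivR (t A B) : DerB Φ S (some (Tr.post t B)) A → SeqIn S t (.rdiv A B) →
      DerB Φ S t (.rdiv A B)
  | prodL (Γ : Ctx) (A B C) :
      DerB Φ S (Γ.fillOpt (some (.comma (.leaf A) (.leaf B)))) C →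
      SeqIn S (Γ.fillOpt (some (.leaf (.prod A B)))) C →
      DerB Φ S (Γ.fillOpt (some (.leaf (.prod A B)))) C
  | prodR (Γ Δ : Tr) (A B) :
      DerB Φ S (some Γ) A → DerB Φ S (some Δ) B →
      SeqIn S (some (.comma Γ Δ)) (.prod A B) →
      DerB Φ S (some (.comma Γ Δ)) (.prod A B)
  | conjL1 (Γ : Ctx) (A1 A2 B) :
      DerB Φ S (Γ.fillOpt (some (.leaf A1))) B →
      SeqIn S (Γ.fillOpt (some (.leaf (.conj A1 A2)))) B →
      DerB Φ S (Γ.fillOpt (some (.leaf (.conj A1 A2)))) B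
  | conjL2 (Γ : Ctx) (A1 A2 B) :
      DerB Φ S (Γ.fillOpt (some (.leaf A2))) B →
      SeqIn S (Γ.fillOpt (some (.leaf (.conj A1 A2)))) B →
      DerB Φ S (Γ.fillOpt (some (.leaf (.conj A1 A2)))) B
  | conjR (t A B) : DerB Φ S t A → DerB Φ S t B → SeqIn S t (.conj A B) →
      DerB Φ S t (.conj A B)
  | disjL (Γ : Ctx) (A1 A2 B) :
      DerB Φ S (Γ.fillOpt (some (.leaf A1))) B →
      DerB Φ S (Γ.fillOpt (some (.leaf A2))) B →
      SeqIn S (Γ.fillOpt (some (.leaf (.disj A1 A2)))) B →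
      DerB Φ S (Γ.fillOpt (some (.leaf (.disj A1 A2)))) B
  | disjR1 (t A1 A2) : DerB Φ S t A1 → SeqIn S t (.disj A1 A2) →
      DerB Φ S t (.disj A1 A2)
  | disjR2 (t A1 A2) : DerB Φ S t A2 → SeqIn S t (.disj A1 A2) →
      DerB Φ S t (.disj A1 A2)
  | cut (Γ : Ctx) (t A B) :
      DerB Φ S t A → DerB Φ S (Γ.fillOpt (some (.leaf A))) B →
      SeqIn S (Γ.fillOpt t) B →
      DerB Φ S (Γ.fillOpt t) B

/-- The dual map `(·)∼` relative to `T` and the fresh-letter assignment `p`: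
`⊤∼ = ⊥`, `⊥∼ = ⊤`, `A∼ = p_A` for `A ∈ T`, `A ≠ ⊤, ⊥`, and it swaps ∧ with ∨. -/
inductive Sim (T : Set Fm) (p : Fm → ℕ) : Fm → Fm → Prop
  | top : Sim T p .top .bot
  | bot : Sim T p .bot .top
  | base {A} : A ∈ T → A ≠ .top → A ≠ .bot → Sim T p A (.atom (p A))
  | conj {A A' B B'} : Sim T p A A' → Sim T p B B' →
      Sim T p (.conj A B) (.disj A' B')
  | disj {A A' B B'} : Sim T p A A' → Sim T p B B' →
      Sim T p (.disj A B) (.conj A' B')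

/-- `Ψ[T] = {A ∧ p_A ⇒ ⊥ : A ∈ T} ∪ {A ∨ p_A ⇒ ⊤ : A ∈ T}`. -/
def Psi (T : Set Fm) (p : Fm → ℕ) : Set (Fm × Fm) :=
  {x | ∃ A ∈ T, x = (.conj A (.atom (p A)), .bot) ∨ x = (.disj A (.atom (p A)), .top)}

/-- `T∼ = T ∪ {p_B : B ∈ T}`. -/
def Tsim (T : Set Fm) (p : Fm → ℕ) : Set Fm := T ∪ {F | ∃ B ∈ T, F = .atom (p B)}

section Helpers

variable {Φ : Set (Fm × Fm)} {S : Set Fm}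

lemma seqLeaf {A B : Fm} (h1 : A ∈ S) (h2 : B ∈ S) :
    SeqIn S (some (.leaf A)) B := by
  refine ⟨?_, h2⟩
  intro x hx
  simp only [Tr.leaves, Set.mem_singleton_iff] at hx
  subst hx; exact h1

lemma dproj1 {X Y : Fm} (hXY : Fm.conj X Y ∈ S) (hX : X ∈ S) :
    DerB Φ S (some (.leaf (.conj X Y))) X :=
  DerB.conjL1 .hole X Y X (DerB.id X (seqLeaf hX hX)) (seqLeaf hXY hX)

lemma dproj2 {X Y : Fm} (hXY : Fm.conj X Y ∈ S) (hY : Y ∈ S) :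
    DerB Φ S (some (.leaf (.conj X Y))) Y :=
  DerB.conjL2 .hole X Y Y (DerB.id Y (seqLeaf hY hY)) (seqLeaf hXY hY)

lemma dcut {Z X W : Fm} (h1 : DerB Φ S (some (.leaf Z)) X)
    (h2 : DerB Φ S (some (.leaf X)) W) (hZ : Z ∈ S) (hW : W ∈ S) :
    DerB Φ S (some (.leaf Z)) W :=
  DerB.cut .hole (some (.leaf Z)) X W h1 h2 (seqLeaf hZ hW)

lemma ddisjL {X Y W : Fm} (h1 : DerB Φ S (some (.leaf X)) W)
    (h2 : DerB Φ S (some (.leaf Y)) W) (hXY : Fm.disj X Y ∈ S) (hW : W ∈ S) :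
    DerB Φ S (some (.leaf (.disj X Y))) W :=
  DerB.disjL .hole X Y W h1 h2 (seqLeaf hXY hW)

lemma dconjR {Z X Y : Fm} (h1 : DerB Φ S (some (.leaf Z)) X)
    (h2 : DerB Φ S (some (.leaf Z)) Y) (hZ : Z ∈ S) (hXY : Fm.conj X Y ∈ S) :
    DerB Φ S (some (.leaf Z)) (.conj X Y) :=
  DerB.conjR _ X Y h1 h2 (seqLeaf hZ hXY)

lemma negConj {B C B' C' : Fm}
    (hc : ∀ {X Y : Fm}, X ∈ S → Y ∈ S → Fm.conj X Y ∈ S)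
    (hd : ∀ {X Y : Fm}, X ∈ S → Y ∈ S → Fm.disj X Y ∈ S)
    (hbot : Fm.bot ∈ S)
    (hB : B ∈ S) (hC : C ∈ S) (hB' : B' ∈ S) (hC' : C' ∈ S)
    (dB : DerB Φ S (some (.leaf (.conj B B'))) .bot)
    (dC : DerB Φ S (some (.leaf (.conj C C'))) .bot) :
    DerB Φ S (some (.leaf (.conj (.conj B C) (.disj B' C')))) .bot := by
  have hBC : Fm.conj B C ∈ S := hc hB hC
  -- (B∧C)∧B' ⇒ ⊥
  have e1 : DerB Φ S (some (.leaf (.conj (.conj B C) B'))) .bot := by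
    refine dcut (X := .conj B B') ?_ dB (hc hBC hB') hbot
    refine dconjR ?_ (dproj2 (hc hBC hB') hB') (hc hBC hB') (hc hB hB')
    exact DerB.conjL1 .hole (.conj B C) B' B (dproj1 hBC hB) (seqLeaf (hc hBC hB') hB)
  have e2 : DerB Φ S (some (.leaf (.conj (.conj B C) C'))) .bot := by
    refine dcut (X := .conj C C') ?_ dC (hc hBC hC') hbot
    refine dconjR ?_ (dproj2 (hc hBC hC') hC') (hc hBC hC') (hc hC hC')
    exact DerB.conjL1 .hole (.conj B C) C' C (dproj2 hBC hC) (seqLeaf (hc hBC hC') hC)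
  have e3 := ddisjL e1 e2 (hd (hc hBC hB') (hc hBC hC')) hbot
  have e4 : DerB Φ S (some (.leaf (.conj (.conj B C) (.disj B' C'))))
      (.disj (.conj (.conj B C) B') (.conj (.conj B C) C')) :=
    DerB.distr (.conj B C) B' C'
      (seqLeaf (hc hBC (hd hB' hC')) (hd (hc hBC hB') (hc hBC hC')))
  exact dcut e4 e3 (hc hBC (hd hB' hC')) hbot

lemma negDisj {B C B' C' : Fm}
    (hc : ∀ {X Y : Fm}, X ∈ S → Y ∈ S → Fm.conj X Y ∈ S)
    (hd : ∀ {X Y : Fm}, X ∈ S → Y ∈ S → Fm.disj X Y ∈ S)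
    (hbot : Fm.bot ∈ S)
    (hB : B ∈ S) (hC : C ∈ S) (hB' : B' ∈ S) (hC' : C' ∈ S)
    (dB : DerB Φ S (some (.leaf (.conj B B'))) .bot)
    (dC : DerB Φ S (some (.leaf (.conj C C'))) .bot) :
    DerB Φ S (some (.leaf (.conj (.disj B C) (.conj B' C')))) .bot := by
  have hBCd : Fm.disj B C ∈ S := hd hB hC
  have hB'C' : Fm.conj B' C' ∈ S := hc hB' hC'
  have hA : Fm.conj (.disj B C) (.conj B' C') ∈ S := hc hBCd hB'C'
  have hA' : Fm.conj (.conj B' C') (.disj B C) ∈ S := hc hB'C' hBCd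
  -- swap
  have swap : DerB Φ S (some (.leaf (.conj (.disj B C) (.conj B' C'))))
      (.conj (.conj B' C') (.disj B C)) :=
    dconjR (dproj2 hA hB'C') (dproj1 hA hBCd) hA hA'
  -- distribution
  have distrI : DerB Φ S (some (.leaf (.conj (.conj B' C') (.disj B C))))
      (.disj (.conj (.conj B' C') B) (.conj (.conj B' C') C)) :=
    DerB.distr (.conj B' C') B C
      (seqLeaf hA' (hd (hc hB'C' hB) (hc hB'C' hC)))
  have f1 : DerB Φ S (some (.leaf (.conj (.conj B' C') B))) .bot := by
    refine dcut (X := .conj B B') ?_ dB (hc hB'C' hB) hbot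
    refine dconjR (dproj2 (hc hB'C' hB) hB) ?_ (hc hB'C' hB) (hc hB hB')
    exact DerB.conjL1 .hole (.conj B' C') B B' (dproj1 hB'C' hB') (seqLeaf (hc hB'C' hB) hB')
  have f2 : DerB Φ S (some (.leaf (.conj (.conj B' C') C))) .bot := by
    refine dcut (X := .conj C C') ?_ dC (hc hB'C' hC) hbot
    refine dconjR (dproj2 (hc hB'C' hC) hC) ?_ (hc hB'C' hC) (hc hC hC')
    exact DerB.conjL1 .hole (.conj B' C') C C' (dproj2 hB'C' hC') (seqLeaf (hc hB'C' hC) hC')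
  have f3 := ddisjL f1 f2 (hd (hc hB'C' hB) (hc hB'C' hC)) hbot
  exact dcut swap (dcut distrI f3 hA' hbot) hA hbot

end Helpers

/-- Membership facts for the similar formula. -/
lemma sim_mem {T : Set Fm} {p : Fm → ℕ} (hT : Fm.top ∈ T) (hB : Fm.bot ∈ T)
    {A A' : Fm} (h : Sim T p A A') : A ∈ cl (Tsim T p) ∧ A' ∈ cl (Tsim T p) := by
  induction h with
  | top => exact ⟨cl.base (Or.inl hT), cl.base (Or.inl hB)⟩
  | bot => exact ⟨cl.base (Or.inl hB), cl.base (Or.inl hT)⟩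
  | base hA _ _ => exact ⟨cl.base (Or.inl hA), cl.base (Or.inr ⟨_, hA, rfl⟩)⟩
  | conj _ _ ih1 ih2 => exact ⟨cl.conj ih1.1 ih2.1, cl.disj ih1.2 ih2.2⟩
  | disj _ _ ih1 ih2 => exact ⟨cl.disj ih1.1 ih2.1, cl.conj ih1.2 ih2.2⟩

/-- Pseudo-complement lemma in BDFNL*: for every `A ∈ c(T)`,
`A ∧ A∼ ⇒ ⊥` and `A ∨ A∼ ⇒ ⊤` are derivable from `Ψ[T]` using only
sequents over the ∧,∨-closure of `T∼`. -/
theorem stmt12 (T : Set Fm) (p : Fm → ℕ)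
    (hT : .top ∈ T) (hB : .bot ∈ T) (hsub : SubClosed T)
    (hnf : ∀ A ∈ T, A.NegFree)
    (hinj : Function.Injective p)
    (hfresh : ∀ A ∈ T, ∀ B : Fm, p B ∉ A.atoms) :
    ∀ A A', A ∈ cl T → Sim T p A A' →
      DerB (Psi T p) (cl (Tsim T p)) (some (.leaf (.conj A A'))) .bot ∧
      DerB (Psi T p) (cl (Tsim T p)) (some (.leaf (.disj A A'))) .top := by
  intro A A' hclA hsim
  clear hclA
  set S := cl (Tsim T p) with hS
  have hbot : Fm.bot ∈ S := cl.base (Or.inl hB)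
  have htop : Fm.top ∈ S := cl.base (Or.inl hT)
  have hc : ∀ {X Y : Fm}, X ∈ S → Y ∈ S → Fm.conj X Y ∈ S := fun h1 h2 => cl.conj h1 h2
  have hd : ∀ {X Y : Fm}, X ∈ S → Y ∈ S → Fm.disj X Y ∈ S := fun h1 h2 => cl.disj h1 h2
  induction hsim with
  | top =>
      refine ⟨?_, DerB.topR _ (seqLeaf (hd htop hbot) htop)⟩
      exact DerB.conjL2 .hole .top .bot .bot
        (DerB.botL .hole .bot (seqLeaf hbot hbot)) (seqLeaf (hc htop hbot) hbot)
  | bot =>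
      refine ⟨?_, DerB.topR _ (seqLeaf (hd hbot htop) htop)⟩
      exact DerB.conjL1 .hole .bot .top .bot
        (DerB.botL .hole .bot (seqLeaf hbot hbot)) (seqLeaf (hc hbot htop) hbot)
  | @base A hA _ _ =>
      have hAm : A ∈ S := cl.base (Or.inl hA)
      have hpA : Fm.atom (p A) ∈ S := cl.base (Or.inr ⟨A, hA, rfl⟩)
      refine ⟨?_, DerB.topR _ (seqLeaf (hd hAm hpA) htop)⟩
      exact DerB.hyp ⟨A, hA, Or.inl rfl⟩ (seqLeaf (hc hAm hpA) hbot)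
  | @conj B B' C C' hsB hsC ihB ihC =>
      have mB := sim_mem hT hB hsB
      have mC := sim_mem hT hB hsC
      refine ⟨negConj hc hd hbot mB.1 mC.1 mB.2 mC.2 ihB.1 ihC.1, ?_⟩
      exact DerB.topR _ (seqLeaf (hd (hc mB.1 mC.1) (hd mB.2 mC.2)) htop)
  | @disj B B' C C' hsB hsC ihB ihC =>
      have mB := sim_mem hT hB hsB
      have mC := sim_mem hT hB hsC
      refine ⟨negDisj hc hd hbot mB.1 mC.1 mB.2 mC.2 ihB.1 ihC.1, ?_⟩
      exact DerB.topR _ (seqLeaf (hd (hd mB.1 mC.1) (hc mB.2 mC.2)) htop)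
end

section
/- Simulation of ⊥ and ⊤ via assumptions in DFNL*: let T be a set of formulas (in the language without ⊥, ⊤, ¬) containing distinguished letters p_⊥ and p_⊤ and closed under subformulas, and let Θ[T] contain the sequents p_⊥ ⇒ A, A∘p_⊥ ⇒ p_⊥, p_⊥∘A ⇒ p_⊥, A ⇒ p_⊤, A∘p_⊤ ⇒ p_⊤, p_⊤∘A ⇒ p_⊤ for all A ∈ T. Then for every A in the closure c(T) of T under ∧ and ∨, all six of these sequents (with that A) are derivable from Θ[T] in DFNL*. -/
/-- Formulas of DFNL*: no constants `⊥`, `⊤` and no negation. -/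
def Fm.Pure : Fm → Prop
  | .atom _ => True
  | .bot => False
  | .top => False
  | .conj A B => A.Pure ∧ B.Pure
  | .disj A B => A.Pure ∧ B.Pure
  | .prod A B => A.Pure ∧ B.Pure
  | .ldiv A B => A.Pure ∧ B.Pure
  | .rdiv A B => A.Pure ∧ B.Pure
  | .neg _ => False

/-- Derivability in DFNL* (distributive full nonassociative Lambek calculus:
no constants, no negation) from a set `Φ` of assumption sequents. -/
inductive DerD (Φ : Set (Tr × Fm)) : Option Tr → Fm → Prop
  | hyp {Γ B} : (Γ, B) ∈ Φ → DerD Φ (some Γ) B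
  | id (A) : DerD Φ (some (.leaf A)) A
  | distr (A B C) :
      DerD Φ (some (.leaf (.conj A (.disj B C)))) (.disj (.conj A B) (.conj A C))
  | ldivL (Γ : Ctx) (Δ : Tr) (A B C) :
      DerD Φ (some Δ) A → DerD Φ (Γ.fillOpt (some (.leaf B))) C →
      DerD Φ (Γ.fillOpt (some (.comma Δ (.leaf (.ldiv A B))))) C
  | ldivR (t A B) : DerD Φ (some (Tr.pre A t)) B → DerD Φ t (.ldiv A B)
  | rdivL (Γ : Ctx) (Δ : Tr) (A B C) :
      DerD Φ (Γ.fillOpt (some (.leaf A))) C → DerD Φ (some Δ) B →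
      DerD Φ (Γ.fillOpt (some (.comma (.leaf (.rdiv A B)) Δ))) C
  | rdivR (t A B) : DerD Φ (some (Tr.post t B)) A → DerD Φ t (.rdiv A B)
  | prodL (Γ : Ctx) (A B C) :
      DerD Φ (Γ.fillOpt (some (.comma (.leaf A) (.leaf B)))) C →
      DerD Φ (Γ.fillOpt (some (.leaf (.prod A B)))) C
  | prodR (Γ Δ : Tr) (A B) :
      DerD Φ (some Γ) A → DerD Φ (some Δ) B →
      DerD Φ (some (.comma Γ Δ)) (.prod A B)
  | conjL1 (Γ : Ctx) (A1 A2 B) :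
      DerD Φ (Γ.fillOpt (some (.leaf A1))) B →
      DerD Φ (Γ.fillOpt (some (.leaf (.conj A1 A2)))) B
  | conjL2 (Γ : Ctx) (A1 A2 B) :
      DerD Φ (Γ.fillOpt (some (.leaf A2))) B →
      DerD Φ (Γ.fillOpt (some (.leaf (.conj A1 A2)))) B
  | conjR (t A B) : DerD Φ t A → DerD Φ t B → DerD Φ t (.conj A B)
  | disjL (Γ : Ctx) (A1 A2 B) :
      DerD Φ (Γ.fillOpt (some (.leaf A1))) B →
      DerD Φ (Γ.fillOpt (some (.leaf A2))) B →
      DerD Φ (Γ.fillOpt (some (.leaf (.disj A1 A2)))) B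
  | disjR1 (t A1 A2) : DerD Φ t A1 → DerD Φ t (.disj A1 A2)
  | disjR2 (t A1 A2) : DerD Φ t A2 → DerD Φ t (.disj A1 A2)
  | cut (Γ : Ctx) (t A B) :
      DerD Φ t A → DerD Φ (Γ.fillOpt (some (.leaf A))) B → DerD Φ (Γ.fillOpt t) B

/-- `Θ[T]`: the six sequent forms
`p_⊥ ⇒ A`, `A∘p_⊥ ⇒ p_⊥`, `p_⊥∘A ⇒ p_⊥`, `A ⇒ p_⊤`, `A∘p_⊤ ⇒ p_⊤`, `p_⊤∘A ⇒ p_⊤`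
for all `A ∈ T`, where `p_⊥ = atom pb` and `p_⊤ = atom pt`. -/
def Theta (T : Set Fm) (pb pt : ℕ) : Set (Tr × Fm) :=
  {x | ∃ A ∈ T,
    x = (.leaf (.atom pb), A) ∨
    x = (.comma (.leaf A) (.leaf (.atom pb)), .atom pb) ∨
    x = (.comma (.leaf (.atom pb)) (.leaf A), .atom pb) ∨
    x = (.leaf A, .atom pt) ∨
    x = (.comma (.leaf A) (.leaf (.atom pt)), .atom pt) ∨
    x = (.comma (.leaf (.atom pt)) (.leaf A), .atom pt)}

/-- Simulation of `⊥` and `⊤` via assumptions in DFNL*: for every `A` in the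
∧,∨-closure of `T`, all six sequent forms of `Θ[T]` with that `A` are derivable
from `Θ[T]` in DFNL*. -/
theorem stmt14 (T : Set Fm) (pb pt : ℕ) (hne : pb ≠ pt)
    (hpb : .atom pb ∈ T) (hpt : .atom pt ∈ T)
    (hsub : SubClosed T) (hpure : ∀ A ∈ T, A.Pure) :
    ∀ A ∈ cl T,
      DerD (Theta T pb pt) (some (.leaf (.atom pb))) A ∧
      DerD (Theta T pb pt) (some (.comma (.leaf A) (.leaf (.atom pb)))) (.atom pb) ∧
      DerD (Theta T pb pt) (some (.comma (.leaf (.atom pb)) (.leaf A))) (.atom pb) ∧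
      DerD (Theta T pb pt) (some (.leaf A)) (.atom pt) ∧
      DerD (Theta T pb pt) (some (.comma (.leaf A) (.leaf (.atom pt)))) (.atom pt) ∧
      DerD (Theta T pb pt) (some (.comma (.leaf (.atom pt)) (.leaf A))) (.atom pt) := by
  intro A hA
  induction hA with
  | @base A h =>
    refine ⟨DerD.hyp ⟨A, h, Or.inl rfl⟩,
      DerD.hyp ⟨A, h, Or.inr (Or.inl rfl)⟩,
      DerD.hyp ⟨A, h, Or.inr (Or.inr (Or.inl rfl))⟩,
      DerD.hyp ⟨A, h, Or.inr (Or.inr (Or.inr (Or.inl rfl)))⟩,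
      DerD.hyp ⟨A, h, Or.inr (Or.inr (Or.inr (Or.inr (Or.inl rfl))))⟩,
      DerD.hyp ⟨A, h, Or.inr (Or.inr (Or.inr (Or.inr (Or.inr rfl))))⟩⟩
  | @conj A1 A2 h1 h2 ih1 ih2 =>
    obtain ⟨a1, a2, a3, a4, a5, a6⟩ := ih1
    obtain ⟨b1, b2, b3, b4, b5, b6⟩ := ih2
    exact ⟨DerD.conjR _ _ _ a1 b1,
      DerD.conjL1 (.left .hole (.leaf (.atom pb))) A1 A2 _ a2,
      DerD.conjL1 (.right (.leaf (.atom pb)) .hole) A1 A2 _ a3,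
      DerD.conjL1 .hole A1 A2 _ a4,
      DerD.conjL1 (.left .hole (.leaf (.atom pt))) A1 A2 _ a5,
      DerD.conjL1 (.right (.leaf (.atom pt)) .hole) A1 A2 _ a6⟩
  | @disj A1 A2 h1 h2 ih1 ih2 =>
    obtain ⟨a1, a2, a3, a4, a5, a6⟩ := ih1
    obtain ⟨b1, b2, b3, b4, b5, b6⟩ := ih2
    exact ⟨DerD.disjR1 _ _ _ a1,
      DerD.disjL (.left .hole (.leaf (.atom pb))) A1 A2 _ a2 b2,
      DerD.disjL (.right (.leaf (.atom pb)) .hole) A1 A2 _ a3 b3,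
      DerD.disjL .hole A1 A2 _ a4 b4,
      DerD.disjL (.left .hole (.leaf (.atom pt))) A1 A2 _ a5 b5,
      DerD.disjL (.right (.leaf (.atom pt)) .hole) A1 A2 _ a6 b6⟩
end

section
/- Contextual bottom lemma: with Θ[T] as above, every c(T)-sequent of the form Γ[p_⊥] ⇒ A (p_⊥ occurring as a leaf of the formula-tree context Γ) is derivable from Θ[T] in DFNL*, and every c(T)-sequent Γ ⇒ p_⊤ is derivable from Θ[T] in DFNL*. -/
def Ctx.fill : Ctx → Tr → Tr
  | .hole, t => t
  | .left c d, t => .comma (c.fill t) d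
  | .right g c, t => .comma g (c.fill t)

lemma Ctx.fillOpt_some (c : Ctx) (t : Tr) : c.fillOpt (some t) = some (c.fill t) := by
  induction c <;> simp_all [Ctx.fillOpt, Ctx.fill]

section Aux
variable {T : Set Fm} {pb pt : ℕ}

lemma bot_to (A : Fm) (h : A ∈ cl T) :
    DerD (Theta T pb pt) (some (.leaf (.atom pb))) A := by
  induction h with
  | base hA => exact .hyp ⟨_, hA, Or.inl rfl⟩
  | conj _ _ ih1 ih2 => exact .conjR _ _ _ ih1 ih2
  | disj _ _ ih1 _ => exact .disjR1 _ _ _ ih1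

lemma to_top (A : Fm) (h : A ∈ cl T) :
    DerD (Theta T pb pt) (some (.leaf A)) (.atom pt) := by
  induction h with
  | base hA => exact .hyp ⟨_, hA, by tauto⟩
  | conj _ _ ih1 _ => exact .conjL1 .hole _ _ _ ih1
  | disj _ _ ih1 ih2 => exact .disjL .hole _ _ _ ih1 ih2

lemma tree_top (hpt : Fm.atom pt ∈ T) :
    ∀ Γ : Tr, Γ.leaves ⊆ cl T → DerD (Theta T pb pt) (some Γ) (.atom pt) := by
  intro Γ
  induction Γ with
  | leaf A => intro h; exact to_top A (h rfl)
  | comma a b iha ihb =>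
    intro h
    have ha := iha fun x hx => h (Or.inl hx)
    have hb := ihb fun x hx => h (Or.inr hx)
    have base : DerD (Theta T pb pt)
        (some (.comma (.leaf (.atom pt)) (.leaf (.atom pt)))) (.atom pt) :=
      .hyp ⟨_, hpt, by tauto⟩
    have s2 := DerD.cut (Ctx.right (.leaf (.atom pt)) .hole) (some b) _ _ hb base
    exact DerD.cut (Ctx.left .hole b) (some a) _ _ ha s2

lemma fill_bot (hpt : Fm.atom pt ∈ T) :
    ∀ Γ : Ctx, (Γ.fill (.leaf (.atom pb))).leaves ⊆ cl T →
      DerD (Theta T pb pt) (some (Γ.fill (.leaf (.atom pb)))) (.atom pb) := by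
  intro Γ
  induction Γ with
  | hole => intro _; exact .id _
  | left c d ih =>
    intro h
    have hc := ih fun x hx => h (Or.inl hx)
    have hd := tree_top (pb := pb) hpt d fun x hx => h (Or.inr hx)
    have base : DerD (Theta T pb pt)
        (some (.comma (.leaf (.atom pb)) (.leaf (.atom pt)))) (.atom pb) :=
      .hyp ⟨_, hpt, by tauto⟩
    have s2 := DerD.cut (Ctx.right (.leaf (.atom pb)) .hole) (some d) _ _ hd base
    exact DerD.cut (Ctx.left .hole d) (some (c.fill (.leaf (.atom pb)))) _ _ hc s2
  | right g c ih =>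
    intro h
    have hc := ih fun x hx => h (Or.inr hx)
    have hg := tree_top (pb := pb) hpt g fun x hx => h (Or.inl hx)
    have base : DerD (Theta T pb pt)
        (some (.comma (.leaf (.atom pt)) (.leaf (.atom pb)))) (.atom pb) :=
      .hyp ⟨_, hpt, by tauto⟩
    have s2 := DerD.cut (Ctx.left .hole (.leaf (.atom pb))) (some g) _ _ hg base
    exact DerD.cut (Ctx.right g .hole) (some (c.fill (.leaf (.atom pb)))) _ _ hc s2

end Aux

/-- Contextual bottom lemma: every `c(T)`-sequent `Γ[p_⊥] ⇒ A` and every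
`c(T)`-sequent `Γ ⇒ p_⊤` is derivable from `Θ[T]` in DFNL*. -/
theorem stmt15 (T : Set Fm) (pb pt : ℕ) (hne : pb ≠ pt)
    (hpb : .atom pb ∈ T) (hpt : .atom pt ∈ T)
    (hsub : SubClosed T) (hpure : ∀ A ∈ T, A.Pure) :
    (∀ (Γ : Ctx) (A : Fm) (Δ : Tr),
        Γ.fillOpt (some (.leaf (.atom pb))) = some Δ →
        Δ.leaves ⊆ cl T → A ∈ cl T →
        DerD (Theta T pb pt) (some Δ) A) ∧
    (∀ Γ : Tr, Γ.leaves ⊆ cl T →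
        DerD (Theta T pb pt) (some Γ) (.atom pt)) := by
  constructor
  · intro Γ A Δ hfill hsubΔ hA
    rw [Ctx.fillOpt_some] at hfill
    obtain rfl : Γ.fill (.leaf (.atom pb)) = Δ := Option.some.inj hfill
    have hb := fill_bot hpt Γ hsubΔ
    exact DerD.cut Ctx.hole (some _) (.atom pb) A hb (bot_to A hA)
  · exact tree_top hpt
end

section
/- Conservativity of modal extensions of BFNL*: for any sequent Γ ⇒ A in the language of BFNL* (i.e., containing no ◇ or □↓ and no modal structure operation ⟨-⟩), Γ ⇒ A is derivable in BFNL* if and only if it is derivable in BFNL*_i, for i ∈ {K, T, K4, S4, S5}. -/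
/-- Formulas of the modal extensions of BFNL*: BFNL* connectives plus `◇` and `□↓`. -/
inductive Fm2 : Type
  | atom : ℕ → Fm2
  | bot  : Fm2
  | top  : Fm2
  | conj : Fm2 → Fm2 → Fm2
  | disj : Fm2 → Fm2 → Fm2
  | prod : Fm2 → Fm2 → Fm2
  | ldiv : Fm2 → Fm2 → Fm2
  | rdiv : Fm2 → Fm2 → Fm2
  | neg  : Fm2 → Fm2
  | dia  : Fm2 → Fm2
  | boxd : Fm2 → Fm2   -- □↓, the residual of ◇
  deriving DecidableEq

/-- `□A := ¬◇¬A`. -/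
def Fm2.box (A : Fm2) : Fm2 := .neg (.dia (.neg A))

/-- Formula trees with the binary structure operation `∘` and the unary `⟨-⟩`. -/
inductive Tr2 : Type
  | leaf : Fm2 → Tr2
  | comma : Tr2 → Tr2 → Tr2
  | single : Tr2 → Tr2   -- ⟨Γ⟩
  deriving DecidableEq

/-- One-hole contexts in modal formula trees. -/
inductive Ctx2 : Type
  | hole : Ctx2
  | left : Ctx2 → Tr2 → Ctx2
  | right : Tr2 → Ctx2 → Ctx2
  | sing : Ctx2 → Ctx2

/-- Fill a context with a possibly empty tree (the hole is deleted if empty). -/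
def Ctx2.fillOpt : Ctx2 → Option Tr2 → Option Tr2
  | .hole, t => t
  | .left c d, t => some (match c.fillOpt t with
      | none => d
      | some g => .comma g d)
  | .right g c, t => some (match c.fillOpt t with
      | none => g
      | some d => .comma g d)
  | .sing c, t => (c.fillOpt t).map .single

/-- `A ∘ Γ` with possibly empty `Γ`. -/
def Tr2.pre (A : Fm2) : Option Tr2 → Tr2
  | none => .leaf A
  | some g => .comma (.leaf A) g

/-- `Γ ∘ B` with possibly empty `Γ`. -/
def Tr2.post : Option Tr2 → Fm2 → Tr2
  | none, B => .leaf B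
  | some g, B => .comma g (.leaf B)

/-- The five modal extensions of BFNL*. -/
inductive Sys : Type
  | K | T | K4 | S4 | S5
  deriving DecidableEq

/-- Does the system contain axiom (T) `A ⇒ ◇A`? -/
def Sys.hasT : Sys → Bool
  | .K => false | .T => true | .K4 => false | .S4 => true | .S5 => true

/-- Does the system contain axiom (4) `◇◇A ⇒ ◇A`? -/
def Sys.has4 : Sys → Bool
  | .K => false | .T => false | .K4 => true | .S4 => true | .S5 => true

/-- Does the system contain axiom (5) `◇A ⇒ □◇A`? -/
def Sys.has5 : Sys → Bool
  | .K => false | .T => false | .K4 => false | .S4 => false | .S5 => true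

/-- Derivability in the modal extension `BFNL*_i` of BFNL*. The parameter `modal`
switches the modal rules and axioms on (`DerM .K true` is `BFNL*_K`, etc.);
with `modal = false` (any `i`) the calculus is plain BFNL* over the extended
language. -/
inductive DerM (i : Sys) (modal : Bool) : Option Tr2 → Fm2 → Prop
  | id (A) : DerM i modal (some (.leaf A)) A
  | distr (A B C) :
      DerM i modal (some (.leaf (.conj A (.disj B C)))) (.disj (.conj A B) (.conj A C))
  | botL (Γ : Ctx2) (A) : DerM i modal (Γ.fillOpt (some (.leaf .bot))) A
  | topR (t) : DerM i modal t .top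
  | neg1 (A) : DerM i modal (some (.leaf (.conj A (.neg A)))) .bot
  | neg2 (A) : DerM i modal (some (.leaf .top)) (.disj A (.neg A))
  | ldivL (Γ : Ctx2) (Δ : Tr2) (A B C) :
      DerM i modal (some Δ) A → DerM i modal (Γ.fillOpt (some (.leaf B))) C →
      DerM i modal (Γ.fillOpt (some (.comma Δ (.leaf (.ldiv A B))))) C
  | ldivR (t A B) : DerM i modal (some (Tr2.pre A t)) B → DerM i modal t (.ldiv A B)
  | rdivL (Γ : Ctx2) (Δ : Tr2) (A B C) :
      DerM i modal (Γ.fillOpt (some (.leaf A))) C → DerM i modal (some Δ) B →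
      DerM i modal (Γ.fillOpt (some (.comma (.leaf (.rdiv A B)) Δ))) C
  | rdivR (t A B) : DerM i modal (some (Tr2.post t B)) A → DerM i modal t (.rdiv A B)
  | prodL (Γ : Ctx2) (A B C) :
      DerM i modal (Γ.fillOpt (some (.comma (.leaf A) (.leaf B)))) C →
      DerM i modal (Γ.fillOpt (some (.leaf (.prod A B)))) C
  | prodR (Γ Δ : Tr2) (A B) :
      DerM i modal (some Γ) A → DerM i modal (some Δ) B →
      DerM i modal (some (.comma Γ Δ)) (.prod A B)
  | conjL1 (Γ : Ctx2) (A1 A2 B) :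
      DerM i modal (Γ.fillOpt (some (.leaf A1))) B →
      DerM i modal (Γ.fillOpt (some (.leaf (.conj A1 A2)))) B
  | conjL2 (Γ : Ctx2) (A1 A2 B) :
      DerM i modal (Γ.fillOpt (some (.leaf A2))) B →
      DerM i modal (Γ.fillOpt (some (.leaf (.conj A1 A2)))) B
  | conjR (t A B) : DerM i modal t A → DerM i modal t B → DerM i modal t (.conj A B)
  | disjL (Γ : Ctx2) (A1 A2 B) :
      DerM i modal (Γ.fillOpt (some (.leaf A1))) B →
      DerM i modal (Γ.fillOpt (some (.leaf A2))) B →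
      DerM i modal (Γ.fillOpt (some (.leaf (.disj A1 A2)))) B
  | disjR1 (t A1 A2) : DerM i modal t A1 → DerM i modal t (.disj A1 A2)
  | disjR2 (t A1 A2) : DerM i modal t A2 → DerM i modal t (.disj A1 A2)
  | cut (Γ : Ctx2) (t A B) :
      DerM i modal t A → DerM i modal (Γ.fillOpt (some (.leaf A))) B →
      DerM i modal (Γ.fillOpt t) B
  -- modal rules:
  | diaL (Γ : Ctx2) (A B) : modal = true →
      DerM i modal (Γ.fillOpt (some (.single (.leaf A)))) B →
      DerM i modal (Γ.fillOpt (some (.leaf (.dia A)))) B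
  | diaR (Γ : Tr2) (A) : modal = true →
      DerM i modal (some Γ) A → DerM i modal (some (.single Γ)) (.dia A)
  | boxdL (Γ : Ctx2) (A B) : modal = true →
      DerM i modal (Γ.fillOpt (some (.leaf A))) B →
      DerM i modal (Γ.fillOpt (some (.single (.leaf (.boxd A))))) B
  | boxdR (Γ : Tr2) (A) : modal = true →
      DerM i modal (some (.single Γ)) A → DerM i modal (some Γ) (.boxd A)
  -- modal axioms, according to the system:
  | axT (A) : modal = true → i.hasT = true →
      DerM i modal (some (.leaf A)) (.dia A)
  | ax4 (A) : modal = true → i.has4 = true →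
      DerM i modal (some (.leaf (.dia (.dia A)))) (.dia A)
  | ax5 (A) : modal = true → i.has5 = true →
      DerM i modal (some (.leaf (.dia A))) (Fm2.box (.dia A))

/-- A formula of the language of BFNL*: no `◇`, no `□↓`. -/
def Fm2.ModalFree : Fm2 → Prop
  | .atom _ => True
  | .bot => True
  | .top => True
  | .conj A B => A.ModalFree ∧ B.ModalFree
  | .disj A B => A.ModalFree ∧ B.ModalFree
  | .prod A B => A.ModalFree ∧ B.ModalFree
  | .ldiv A B => A.ModalFree ∧ B.ModalFree
  | .rdiv A B => A.ModalFree ∧ B.ModalFree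
  | .neg A => A.ModalFree
  | .dia _ => False
  | .boxd _ => False

/-- A formula tree of the language of BFNL*: no `⟨-⟩` and all leaves modal-free. -/
def Tr2.ModalFree : Tr2 → Prop
  | .leaf A => A.ModalFree
  | .comma Γ Δ => Γ.ModalFree ∧ Δ.ModalFree
  | .single _ => False

/-- Erase modal operators from a formula. -/
def eF : Fm2 → Fm2
  | .atom n => .atom n
  | .bot => .bot
  | .top => .top
  | .conj A B => .conj (eF A) (eF B)
  | .disj A B => .disj (eF A) (eF B)
  | .prod A B => .prod (eF A) (eF B)
  | .ldiv A B => .ldiv (eF A) (eF B)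
  | .rdiv A B => .rdiv (eF A) (eF B)
  | .neg A => .neg (eF A)
  | .dia A => eF A
  | .boxd A => eF A

/-- Erase the modal structure operation from a tree. -/
def eT : Tr2 → Tr2
  | .leaf A => .leaf (eF A)
  | .comma a b => .comma (eT a) (eT b)
  | .single a => eT a

def eC : Ctx2 → Ctx2
  | .hole => .hole
  | .left c d => .left (eC c) (eT d)
  | .right g c => .right (eT g) (eC c)
  | .sing c => eC c

lemma eF_mf : ∀ A : Fm2, A.ModalFree → eF A = A := by
  intro A h
  induction A <;> simp_all [eF, Fm2.ModalFree]

lemma eT_mf : ∀ Γ : Tr2, Γ.ModalFree → eT Γ = Γ := by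
  intro Γ h
  induction Γ <;> simp_all [eT, Tr2.ModalFree, eF_mf]

lemma fill_erase (c : Ctx2) (t : Option Tr2) :
    Option.map eT (c.fillOpt t) = (eC c).fillOpt (Option.map eT t) := by
  induction c generalizing t with
  | hole => rfl
  | left c d ih =>
      simp only [Ctx2.fillOpt, eC, Option.map_some, ← ih]
      cases c.fillOpt t <;> simp [eT]
  | right g c ih =>
      simp only [Ctx2.fillOpt, eC, Option.map_some, ← ih]
      cases c.fillOpt t <;> simp [eT]
  | sing c ih =>
      simp only [Ctx2.fillOpt, eC, ← ih]
      cases c.fillOpt t <;> simp [eT]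

lemma pre_erase (A : Fm2) (t : Option Tr2) :
    eT (Tr2.pre A t) = Tr2.pre (eF A) (Option.map eT t) := by
  cases t <;> rfl

lemma post_erase (t : Option Tr2) (B : Fm2) :
    eT (Tr2.post t B) = Tr2.post (Option.map eT t) (eF B) := by
  cases t <;> rfl

/-- Double negation introduction in BFNL*. -/
lemma dni (i : Sys) (A : Fm2) : DerM i false (some (.leaf A)) (.neg (.neg A)) := by
  have h1 : DerM i false (some (.leaf A)) (.disj (.neg A) (.neg (.neg A))) :=
    .cut .hole (some (.leaf A)) .top _ (.topR _) (.neg2 (.neg A))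
  have h2 : DerM i false (some (.leaf A))
      (.conj A (.disj (.neg A) (.neg (.neg A)))) := .conjR _ _ _ (.id A) h1
  have h3 := DerM.distr (i := i) (modal := false) A (.neg A) (.neg (.neg A))
  have h4 : DerM i false (some (.leaf (.conj A (.neg A)))) (.neg (.neg A)) :=
    .cut .hole (some (.leaf (.conj A (.neg A)))) .bot _ (.neg1 A) (.botL .hole _)
  have h5 : DerM i false (some (.leaf (.conj A (.neg (.neg A))))) (.neg (.neg A)) :=
    .conjL2 .hole A _ _ (.id _)
  have h6 : DerM i false
      (some (.leaf (.disj (.conj A (.neg A)) (.conj A (.neg (.neg A))))))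
      (.neg (.neg A)) := .disjL .hole _ _ _ h4 h5
  have h7 : DerM i false (some (.leaf (.conj A (.disj (.neg A) (.neg (.neg A))))))
      (.neg (.neg A)) := .cut .hole _ _ _ h3 h6
  exact .cut .hole (some (.leaf A)) _ _ h2 h7

/-- Monotonicity: non-modal derivations lift to the modal calculus. -/
lemma mono {i : Sys} {t : Option Tr2} {A : Fm2}
    (h : DerM i false t A) : DerM i true t A := by
  induction h with
  | id A => exact .id A
  | distr A B C => exact .distr A B C
  | botL Γ A => exact .botL Γ A
  | topR t => exact .topR t
  | neg1 A => exact .neg1 A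
  | neg2 A => exact .neg2 A
  | ldivL Γ Δ A B C h1 h2 ih1 ih2 => exact .ldivL Γ Δ A B C ih1 ih2
  | ldivR t A B h ih => exact .ldivR t A B ih
  | rdivL Γ Δ A B C h1 h2 ih1 ih2 => exact .rdivL Γ Δ A B C ih1 ih2
  | rdivR t A B h ih => exact .rdivR t A B ih
  | prodL Γ A B C h ih => exact .prodL Γ A B C ih
  | prodR Γ Δ A B h1 h2 ih1 ih2 => exact .prodR Γ Δ A B ih1 ih2
  | conjL1 Γ A1 A2 B h ih => exact .conjL1 Γ A1 A2 B ih
  | conjL2 Γ A1 A2 B h ih => exact .conjL2 Γ A1 A2 B ih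
  | conjR t A B h1 h2 ih1 ih2 => exact .conjR t A B ih1 ih2
  | disjL Γ A1 A2 B h1 h2 ih1 ih2 => exact .disjL Γ A1 A2 B ih1 ih2
  | disjR1 t A1 A2 h ih => exact .disjR1 t A1 A2 ih
  | disjR2 t A1 A2 h ih => exact .disjR2 t A1 A2 ih
  | cut Γ t A B h1 h2 ih1 ih2 => exact .cut Γ t A B ih1 ih2
  | diaL _ _ _ hm _ _ => exact absurd hm (by simp)
  | diaR _ _ hm _ _ => exact absurd hm (by simp)
  | boxdL _ _ _ hm _ _ => exact absurd hm (by simp)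
  | boxdR _ _ hm _ _ => exact absurd hm (by simp)
  | axT _ hm _ => exact absurd hm (by simp)
  | ax4 _ hm _ => exact absurd hm (by simp)
  | ax5 _ hm _ => exact absurd hm (by simp)

/-- Erasure soundness: any modal derivation erases to a non-modal one. -/
lemma erase_der {i : Sys} {t : Option Tr2} {A : Fm2}
    (h : DerM i true t A) : DerM i false (Option.map eT t) (eF A) := by
  induction h with
  | id A => exact .id (eF A)
  | distr A B C => exact .distr (eF A) (eF B) (eF C)
  | botL Γ A =>
      have := DerM.botL (i := i) (modal := false) (eC Γ) (eF A)
      rw [fill_erase]; exact this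
  | topR t => exact .topR _
  | neg1 A => exact .neg1 (eF A)
  | neg2 A => exact .neg2 (eF A)
  | ldivL Γ Δ A B C h1 h2 ih1 ih2 =>
      rw [fill_erase] at ih2 ⊢
      exact .ldivL (eC Γ) (eT Δ) (eF A) (eF B) (eF C) ih1 ih2
  | ldivR t A B h ih =>
      simp only [Option.map, pre_erase] at ih
      exact .ldivR _ (eF A) (eF B) ih
  | rdivL Γ Δ A B C h1 h2 ih1 ih2 =>
      rw [fill_erase] at ih1 ⊢
      exact .rdivL (eC Γ) (eT Δ) (eF A) (eF B) (eF C) ih1 ih2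
  | rdivR t A B h ih =>
      simp only [Option.map, post_erase] at ih
      exact .rdivR _ (eF A) (eF B) ih
  | prodL Γ A B C h ih =>
      rw [fill_erase] at ih ⊢
      exact .prodL (eC Γ) (eF A) (eF B) (eF C) ih
  | prodR Γ Δ A B h1 h2 ih1 ih2 =>
      exact .prodR (eT Γ) (eT Δ) (eF A) (eF B) ih1 ih2
  | conjL1 Γ A1 A2 B h ih =>
      rw [fill_erase] at ih ⊢
      exact .conjL1 (eC Γ) (eF A1) (eF A2) (eF B) ih
  | conjL2 Γ A1 A2 B h ih =>
      rw [fill_erase] at ih ⊢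
      exact .conjL2 (eC Γ) (eF A1) (eF A2) (eF B) ih
  | conjR t A B h1 h2 ih1 ih2 => exact .conjR _ (eF A) (eF B) ih1 ih2
  | disjL Γ A1 A2 B h1 h2 ih1 ih2 =>
      rw [fill_erase] at ih1 ih2 ⊢
      exact .disjL (eC Γ) (eF A1) (eF A2) (eF B) ih1 ih2
  | disjR1 t A1 A2 h ih => exact .disjR1 _ (eF A1) (eF A2) ih
  | disjR2 t A1 A2 h ih => exact .disjR2 _ (eF A1) (eF A2) ih
  | cut Γ t A B h1 h2 ih1 ih2 =>
      rw [fill_erase] at ih2 ⊢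
      exact .cut (eC Γ) (Option.map eT t) (eF A) (eF B) ih1 ih2
  | diaL Γ A B hm h ih =>
      rw [fill_erase] at ih ⊢
      exact ih
  | diaR Γ A hm h ih => exact ih
  | boxdL Γ A B hm h ih =>
      rw [fill_erase] at ih ⊢
      exact ih
  | boxdR Γ A hm h ih => exact ih
  | axT A hm _ => exact .id (eF A)
  | ax4 A hm _ => exact .id (eF A)
  | ax5 A hm _ => exact dni i (eF A)

/-- Conservativity of the modal extensions of BFNL*: a sequent `Γ ⇒ A` in the
language of BFNL* is derivable in BFNL* iff it is derivable in `BFNL*_i`,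
for each `i ∈ {K, T, K4, S4, S5}`. -/
theorem stmt19 (i : Sys) (t : Option Tr2) (A : Fm2)
    (ht : ∀ Γ, t = some Γ → Γ.ModalFree) (hA : A.ModalFree) :
    DerM i false t A ↔ DerM i true t A := by
  constructor
  · exact mono
  · intro h
    have h' := erase_der h
    have hAe : eF A = A := eF_mf A hA
    have hte : Option.map eT t = t := by
      cases t with
      | none => rfl
      | some Γ => simp [eT_mf Γ (ht Γ rfl)]
    rwa [hAe, hte] at h'
end
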